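/- arXiv:math/0212203 — 2 statements merged into one kernel-verified Lean document; each statement's English description precedes it below -/
import Mathlib

section
/- With notation as in the monomial valuation setup, let $M\subset\mathbf{Z}^n$ be the group of integer solutions of $\sum_{i=1}^n y_iB_i=0$ and let $A_1,\ldots,A_{n-m}$ be a $\mathbf{Z}$-basis of $M$. Then the field $K_L$ of quotients of $L$-forms of equal $L$-degree equals $k(\mathbf{X}^{A_1},\ldots,\mathbf{X}^{A_{n-m}})$, the subfield of $k((X_1,\ldots,X_n))$ generated by the fractional monomials $\mathbf{X}^{A_j}$. -/
/-- The `L`-degree of an exponent vector. -/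
noncomputable def degL (m n : ℕ) (B : Fin n → (Fin m → ℕ)) (A : Fin n →₀ ℕ) :
    Fin m → ℤ :=
  fun j => ∑ i, (A i : ℤ) * (B i j)

namespace KLaux

open MvPolynomial

variable (k : Type*) [Field k] (m n : ℕ)

/-- The fractional monomial with exponent vector `y`. -/
noncomputable def mu (y : Fin n → ℤ) : FractionRing (MvPolynomial (Fin n) k) :=
  ∏ i, (algebraMap (MvPolynomial (Fin n) k) (FractionRing (MvPolynomial (Fin n) k))
    (MvPolynomial.X i)) ^ (y i)

lemma phi_inj : Function.Injective
    (algebraMap (MvPolynomial (Fin n) k) (FractionRing (MvPolynomial (Fin n) k))) :=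
  IsFractionRing.injective _ _

lemma phi_ne_zero {p : MvPolynomial (Fin n) k} (hp : p ≠ 0) :
    algebraMap (MvPolynomial (Fin n) k) (FractionRing (MvPolynomial (Fin n) k)) p ≠ 0 :=
  fun h => hp (phi_inj k n (by rw [h, map_zero]))

lemma phiX_ne_zero (i : Fin n) :
    algebraMap (MvPolynomial (Fin n) k) (FractionRing (MvPolynomial (Fin n) k))
      (MvPolynomial.X i) ≠ 0 :=
  phi_ne_zero k n (X_ne_zero i)

lemma mu_ne_zero (y : Fin n → ℤ) : mu k n y ≠ 0 :=
  Finset.prod_ne_zero_iff.2 fun i _ => zpow_ne_zero _ (phiX_ne_zero k n i)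

lemma mu_zero : mu k n 0 = 1 := by simp [mu]

lemma mu_add (y z : Fin n → ℤ) : mu k n (y + z) = mu k n y * mu k n z := by
  rw [mu, mu, mu, ← Finset.prod_mul_distrib]
  exact Finset.prod_congr rfl fun i _ => zpow_add₀ (phiX_ne_zero k n i) _ _

lemma mu_smul (c : ℤ) (y : Fin n → ℤ) : mu k n (c • y) = (mu k n y) ^ c := by
  rw [mu, mu, ← Finset.prod_zpow]
  exact Finset.prod_congr rfl fun i _ => by
    rw [Pi.smul_apply, smul_eq_mul, mul_comm, zpow_mul]

lemma mu_sub (y z : Fin n → ℤ) : mu k n (y - z) = mu k n y / mu k n z := by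
  have h := mu_add k n (y - z) z
  rw [sub_add_cancel] at h
  rw [eq_div_iff (mu_ne_zero k n z), ← h]

lemma mu_natCast (E : Fin n →₀ ℕ) :
    algebraMap (MvPolynomial (Fin n) k) (FractionRing (MvPolynomial (Fin n) k))
      (monomial E 1) = mu k n (fun i => (E i : ℤ)) := by
  rw [← prod_X_pow_eq_monomial, map_prod, mu]
  rw [← Finset.prod_subset (Finset.subset_univ E.support)
    (fun i _ hi => by
      rw [Finsupp.notMem_support_iff.1 hi]; simp)]
  exact Finset.prod_congr rfl fun i _ => by rw [map_pow, zpow_natCast]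

lemma mu_mem_of_span {N : ℕ} (A : Fin N → Fin n → ℤ)
    (F : Subfield (FractionRing (MvPolynomial (Fin n) k)))
    (hA : ∀ j, mu k n (A j) ∈ F) {y : Fin n → ℤ}
    (hy : y ∈ Submodule.span ℤ (Set.range A)) : mu k n y ∈ F := by
  induction hy using Submodule.span_induction with
  | mem x hx => obtain ⟨j, rfl⟩ := hx; exact hA j
  | zero => rw [mu_zero]; exact F.one_mem
  | add y z _ _ hy hz => rw [mu_add]; exact F.mul_mem hy hz
  | smul c y _ hy => rw [mu_smul]; exact F.zpow_mem hy c

lemma degL_add (B : Fin n → (Fin m → ℕ)) (E F : Fin n →₀ ℕ) :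
    degL m n B (E + F) = degL m n B E + degL m n B F := by
  funext j
  simp only [degL, Pi.add_apply, ← Finset.sum_add_distrib, Finsupp.add_apply]
  exact Finset.sum_congr rfl fun i _ => by push_cast; ring

lemma num_mem (B : Fin n → Fin m → ℕ) {N : ℕ} (A : Fin N → Fin n → ℤ)
    (hAspan : ∀ y : Fin n → ℤ, (∀ l, (∑ i, y i * (B i l : ℤ)) = 0) →
      y ∈ Submodule.span ℤ (Set.range A))
    (F : Subfield (FractionRing (MvPolynomial (Fin n) k)))
    (hA : ∀ j, mu k n (A j) ∈ F)
    (hC : ∀ c : k, algebraMap (MvPolynomial (Fin n) k)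
      (FractionRing (MvPolynomial (Fin n) k)) (C c) ∈ F)
    (b : Fin m → ℤ) (f : MvPolynomial (Fin n) k)
    (hf : ∀ E ∈ f.support, degL m n B E = b)
    (E0 : Fin n →₀ ℕ) (hE0 : degL m n B E0 = b) :
    algebraMap (MvPolynomial (Fin n) k) (FractionRing (MvPolynomial (Fin n) k)) f *
      (mu k n (fun i => (E0 i : ℤ)))⁻¹ ∈ F := by
  rw [f.as_sum, map_sum, Finset.sum_mul]
  refine F.sum_mem fun E hE => ?_
  have hmono : (algebraMap (MvPolynomial (Fin n) k) (FractionRing (MvPolynomial (Fin n) k)))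
      (monomial E (coeff E f))
      = algebraMap (MvPolynomial (Fin n) k) (FractionRing (MvPolynomial (Fin n) k))
          (C (coeff E f)) * mu k n (fun i => (E i : ℤ)) := by
    rw [← mu_natCast, ← map_mul, C_mul_monomial, mul_one]
  rw [hmono, mul_assoc, ← div_eq_mul_inv, ← mu_sub]
  refine F.mul_mem (hC _) (mu_mem_of_span k n A F hA (hAspan _ ?_))
  intro l
  have h1 := congrFun (hf E hE) l
  have h2 := congrFun hE0 l
  simp only [degL] at h1 h2
  simp only [Pi.sub_apply, sub_mul, Finset.sum_sub_distrib, h1, h2, sub_self]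

end KLaux

set_option maxHeartbeats 2000000 in
set_option synthInstance.maxHeartbeats 400000 in
open MvPolynomial KLaux in
/-- The field `K_L` of quotients of `L`-forms of equal `L`-degree equals
`k(X^{A₁},…,X^{A_{n-m}})`, the subfield of `k((X₁,…,Xₙ))` generated over `k` by the
fractional monomials whose exponent vectors `A₁,…,A_{n-m}` form a `ℤ`-basis of the group
of solutions of `∑ yᵢBᵢ = 0`. -/
theorem KL_eq_field_of_fractional_monomials (k : Type*) [Field k] (m n : ℕ)
    (B : Fin n → (Fin m → ℕ)) (hB : ∀ i, B i ≠ 0)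
    (hgen : AddSubgroup.closure (Set.range fun i => fun j => (B i j : ℤ)) = ⊤)
    (A : Fin (n - m) → (Fin n → ℤ))
    (hAsol : ∀ j l, (∑ i, A j i * (B i l : ℤ)) = 0)
    (hAindep : LinearIndependent ℤ A)
    (hAspan : ∀ y : Fin n → ℤ, (∀ l, (∑ i, y i * (B i l : ℤ)) = 0) →
      y ∈ Submodule.span ℤ (Set.range A))
    (S : Set (FractionRing (MvPolynomial (Fin n) k)))
    (hS : S = {x | ∃ (b : Fin m → ℤ) (f g : MvPolynomial (Fin n) k), f ≠ 0 ∧ g ≠ 0 ∧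
      (∀ E ∈ f.support, degL m n B E = b) ∧ (∀ E ∈ g.support, degL m n B E = b) ∧
      x = algebraMap (MvPolynomial (Fin n) k) (FractionRing (MvPolynomial (Fin n) k)) f /
        algebraMap (MvPolynomial (Fin n) k) (FractionRing (MvPolynomial (Fin n) k)) g}) :
    S ∪ {0} =
      ↑(Subfield.closure
        ((Set.range fun j : Fin (n - m) =>
          ∏ i, (algebraMap (MvPolynomial (Fin n) k) (FractionRing (MvPolynomial (Fin n) k))
            (MvPolynomial.X i)) ^ (A j i)) ∪
         (Set.range fun c : k =>
          algebraMap (MvPolynomial (Fin n) k) (FractionRing (MvPolynomial (Fin n) k))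
            (MvPolynomial.C c)))) := by
  classical
  subst hS
  set φ := algebraMap (MvPolynomial (Fin n) k) (FractionRing (MvPolynomial (Fin n) k))
    with hφdef
  -- the generating set
  set G : Set (FractionRing (MvPolynomial (Fin n) k)) :=
    (Set.range fun j : Fin (n - m) => ∏ i, (φ (MvPolynomial.X i)) ^ (A j i)) ∪
    (Set.range fun c : k => φ (MvPolynomial.C c)) with hGdef
  have hmuG : ∀ j, mu k n (A j) ∈ Subfield.closure G :=
    fun j => Subfield.subset_closure (Or.inl ⟨j, rfl⟩)
  have hCG : ∀ c : k, φ (C c) ∈ Subfield.closure G :=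
    fun c => Subfield.subset_closure (Or.inr ⟨c, rfl⟩)
  -- the set S as a set
  set S' : Set (FractionRing (MvPolynomial (Fin n) k)) :=
    {x | ∃ (b : Fin m → ℤ) (f g : MvPolynomial (Fin n) k), f ≠ 0 ∧ g ≠ 0 ∧
      (∀ E ∈ f.support, degL m n B E = b) ∧ (∀ E ∈ g.support, degL m n B E = b) ∧
      x = φ f / φ g} with hS'def
  -- support of constants
  have hsupC : ∀ c : k, c ≠ 0 → (C c : MvPolynomial (Fin n) k).support = {0} := by
    intro c hc
    rw [C_apply, support_monomial]
    simp [hc]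
  have hdeg0 : degL m n B 0 = 0 := by
    funext j; simp [degL]
  -- S' ∪ {0} is a subfield
  have hone : (1 : FractionRing (MvPolynomial (Fin n) k)) ∈ S' := by
    refine ⟨0, 1, 1, one_ne_zero, one_ne_zero, ?_, ?_, by rw [map_one, div_one]⟩ <;>
    · intro E hE
      rw [show (1 : MvPolynomial (Fin n) k) = C 1 from (map_one C).symm] at hE
      rw [hsupC 1 one_ne_zero] at hE
      rw [Finset.mem_singleton.1 hE, hdeg0]
  have hmulS : ∀ x y, x ∈ S' → y ∈ S' → x * y ∈ S' := by
    rintro x y ⟨b1, f1, g1, hf1, hg1, hdf1, hdg1, rfl⟩ ⟨b2, f2, g2, hf2, hg2, hdf2, hdg2, rfl⟩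
    refine ⟨b1 + b2, f1 * f2, g1 * g2, mul_ne_zero hf1 hf2, mul_ne_zero hg1 hg2, ?_, ?_,
      by rw [map_mul, map_mul, div_mul_div_comm]⟩
    · intro E hE
      obtain ⟨E1, h1, E2, h2, rfl⟩ := Finset.mem_add.1 (support_mul f1 f2 hE)
      rw [degL_add, hdf1 E1 h1, hdf2 E2 h2]
    · intro E hE
      obtain ⟨E1, h1, E2, h2, rfl⟩ := Finset.mem_add.1 (support_mul g1 g2 hE)
      rw [degL_add, hdg1 E1 h1, hdg2 E2 h2]
  have hnegS : ∀ x, x ∈ S' → -x ∈ S' := by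
    rintro x ⟨b, f, g, hf, hg, hdf, hdg, rfl⟩
    exact ⟨b, -f, g, neg_ne_zero.2 hf, hg,
      fun E hE => hdf E (by rwa [support_neg] at hE), hdg,
      by rw [map_neg, neg_div]⟩
  have hinvS : ∀ x, x ∈ S' → x⁻¹ ∈ S' := by
    rintro x ⟨b, f, g, hf, hg, hdf, hdg, rfl⟩
    exact ⟨b, g, f, hg, hf, hdg, hdf, by rw [inv_div]⟩
  have haddS : ∀ x y, x ∈ S' → y ∈ S' → x + y ∈ S' ∪ {0} := by
    rintro x y ⟨b1, f1, g1, hf1, hg1, hdf1, hdg1, rfl⟩ ⟨b2, f2, g2, hf2, hg2, hdf2, hdg2, rfl⟩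
    have hg1' : φ g1 ≠ 0 := phi_ne_zero k n hg1
    have hg2' : φ g2 ≠ 0 := phi_ne_zero k n hg2
    have heq : φ f1 / φ g1 + φ f2 / φ g2 = φ (f1 * g2 + g1 * f2) / φ (g1 * g2) := by
      rw [div_add_div _ _ hg1' hg2', map_add, map_mul, map_mul, map_mul]
    by_cases hz : f1 * g2 + g1 * f2 = 0
    · right
      rw [heq, hz, map_zero, zero_div]
      rfl
    · left
      refine ⟨b1 + b2, f1 * g2 + g1 * f2, g1 * g2, hz, mul_ne_zero hg1 hg2, ?_, ?_, heq⟩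
      · intro E hE
        rcases Finset.mem_union.1 (support_add hE) with h | h
        · obtain ⟨E1, h1, E2, h2, rfl⟩ := Finset.mem_add.1 (support_mul f1 g2 h)
          rw [degL_add, hdf1 E1 h1, hdg2 E2 h2]
        · obtain ⟨E1, h1, E2, h2, rfl⟩ := Finset.mem_add.1 (support_mul g1 f2 h)
          rw [degL_add, hdg1 E1 h1, hdf2 E2 h2, add_comm]
      · intro E hE
        obtain ⟨E1, h1, E2, h2, rfl⟩ := Finset.mem_add.1 (support_mul g1 g2 hE)
        rw [degL_add, hdg1 E1 h1, hdg2 E2 h2]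
  set T : Subfield (FractionRing (MvPolynomial (Fin n) k)) :=
    { carrier := S' ∪ {0}
      one_mem' := Or.inl hone
      zero_mem' := Or.inr rfl
      mul_mem' := by
        rintro a c (ha | ha) (hc | hc)
        · exact Or.inl (hmulS a c ha hc)
        · right; rw [Set.mem_singleton_iff.1 hc, mul_zero]; rfl
        · right; rw [Set.mem_singleton_iff.1 ha, zero_mul]; rfl
        · right; rw [Set.mem_singleton_iff.1 ha, zero_mul]; rfl
      add_mem' := by
        rintro a c (ha | ha) (hc | hc)
        · exact haddS a c ha hc
        · rw [Set.mem_singleton_iff.1 hc, add_zero]; exact Or.inl ha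
        · rw [Set.mem_singleton_iff.1 ha, zero_add]; exact Or.inl hc
        · right; rw [Set.mem_singleton_iff.1 ha, Set.mem_singleton_iff.1 hc, add_zero]; rfl
      neg_mem' := by
        rintro a (ha | ha)
        · exact Or.inl (hnegS a ha)
        · right; rw [Set.mem_singleton_iff.1 ha, neg_zero]; rfl
      inv_mem' := by
        rintro a (ha | ha)
        · exact Or.inl (hinvS a ha)
        · right; rw [Set.mem_singleton_iff.1 ha, inv_zero]; rfl } with hTdef
  apply Set.Subset.antisymm
  · -- S' ∪ {0} ⊆ closure G
    rintro x (hx | hx)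
    · obtain ⟨b, f, g, hf0, hg0, hfdeg, hgdeg, rfl⟩ := hx
      obtain ⟨E0, hE0⟩ := support_nonempty.2 hg0
      have hb := hgdeg E0 hE0
      have hmu0 : (mu k n (fun i => (E0 i : ℤ)))⁻¹ ≠ 0 :=
        inv_ne_zero (mu_ne_zero k n _)
      have key : φ f / φ g
          = (φ f * (mu k n (fun i => (E0 i : ℤ)))⁻¹) /
            (φ g * (mu k n (fun i => (E0 i : ℤ)))⁻¹) :=
        (mul_div_mul_right _ _ hmu0).symm
      rw [key]
      exact SetLike.mem_coe.2 ((Subfield.closure G).div_mem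
        (num_mem k m n B A hAspan _ hmuG hCG b f hfdeg E0 hb)
        (num_mem k m n B A hAspan _ hmuG hCG b g hgdeg E0 hb))
    · rw [Set.mem_singleton_iff.1 hx]
      exact SetLike.mem_coe.2 (Subfield.closure G).zero_mem
  · -- closure G ⊆ S' ∪ {0}
    have hGT : G ⊆ (T : Set (FractionRing (MvPolynomial (Fin n) k))) := by
      rintro x (⟨j, rfl⟩ | ⟨c, rfl⟩)
      · -- fractional monomial
        set p : Fin n → ℕ := fun i => (A j i).toNat with hp
        set q : Fin n → ℕ := fun i => (-(A j i)).toNat with hq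
        have hpq : ∀ i, (p i : ℤ) - (q i : ℤ) = A j i := fun i => by
          simp only [hp, hq]; omega
        set P : Fin n →₀ ℕ := Finsupp.equivFunOnFinite.symm p with hP
        set Q : Fin n →₀ ℕ := Finsupp.equivFunOnFinite.symm q with hQ
        have hPs : ∀ i, (P i : ℤ) = p i := fun i => rfl
        have hQs : ∀ i, (Q i : ℤ) = q i := fun i => rfl
        have hdeg : degL m n B P = degL m n B Q := by
          funext l
          have : degL m n B P l - degL m n B Q l = 0 := by
            simp only [degL, ← Finset.sum_sub_distrib, ← sub_mul]
            rw [← hAsol j l]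
            exact Finset.sum_congr rfl fun i _ => by rw [hPs, hQs, hpq]
          linarith
        have hmono : ∀ (E : Fin n →₀ ℕ), (monomial E (1:k)) ≠ 0 :=
          fun E => fun h => one_ne_zero ((monomial_eq_zero (s := E)).1 h)
        have hsup : ∀ (E : Fin n →₀ ℕ) (F : Fin n →₀ ℕ),
            F ∈ (monomial E (1:k)).support → F = E := by
          intro E F hF
          rw [support_monomial] at hF
          simpa [one_ne_zero] using hF
        have hval : (∏ i, (φ (MvPolynomial.X i)) ^ (A j i))
            = φ (monomial P (1:k)) / φ (monomial Q (1:k)) := by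
          rw [mu_natCast, mu_natCast, ← mu_sub]
          show mu k n (A j) = _
          congr 1
          funext i
          rw [Pi.sub_apply, hPs, hQs, hpq]
        refine Or.inl ⟨degL m n B Q, monomial P 1, monomial Q 1, hmono P, hmono Q,
          ?_, ?_, hval⟩
        · intro E hE; rw [hsup P E hE, hdeg]
        · intro E hE; rw [hsup Q E hE]
      · -- constant
        show φ (C c) ∈ (S' ∪ {0} : Set (FractionRing (MvPolynomial (Fin n) k)))
        by_cases hc : c = 0
        · right
          rw [hc, map_zero, map_zero]
          rfl
        · left
          have hCc : (C c : MvPolynomial (Fin n) k) ≠ 0 := by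
            intro h
            exact hc (by simpa using h)
          refine ⟨0, C c, 1, hCc, one_ne_zero, ?_, ?_, by rw [map_one, div_one]⟩
          · intro E hE
            rw [hsupC c hc] at hE
            rw [Finset.mem_singleton.1 hE, hdeg0]
          · intro E hE
            rw [show (1 : MvPolynomial (Fin n) k) = C 1 from (map_one C).symm] at hE
            rw [hsupC 1 one_ne_zero] at hE
            rw [Finset.mem_singleton.1 hE, hdeg0]
    exact fun x hx => Subfield.closure_le.2 hGT hx
end

section
/- Let $v$ be a discrete rank two valuation of $K=k((X_1,X_2))$ with value group $\mathbf{Z}^2$ (lexicographically ordered), finite over $R=k[[X_1,X_2]]$ with center the maximal ideal. If $v(X_1)$ and $v(X_2)$ are $\mathbf{Z}$-linearly independent, then $\{v(X_1),v(X_2)\}$ is a basis of $\mathbf{Z}^2$ and $v$ is the monomial valuation associated to $\{v(X_1),v(X_2)\}$; in particular $v$ is zero-dimensional (its residue field is $k$). -/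
noncomputable instance instLexGrp (m : ℕ) : IsOrderedCancelAddMonoid (Lex (Fin m → ℤ)) :=
  inferInstance

noncomputable instance instLexLinOrd (m : ℕ) : LinearOrder (Lex (Fin m → ℤ)) :=
  @Pi.Lex.linearOrder (Fin m) (fun _ => ℤ) (inferInstanceAs (LinearOrder (Fin m)))
    (inferInstanceAs (WellFoundedLT (Fin m))) (fun _ => inferInstance)

noncomputable instance instLexMWZ (m : ℕ) :
    LinearOrderedCommMonoidWithZero (WithZero (Multiplicative (Lex (Fin m → ℤ)))) :=
  (inferInstance : LinearOrderedCommGroupWithZero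
    (WithZero (Multiplicative (Lex (Fin m → ℤ))))).toLinearOrderedCommMonoidWithZero

noncomputable def expNeg (m : ℕ) (p : Lex (Fin m → ℤ)) :
    WithZero (Multiplicative (Lex (Fin m → ℤ))) :=
  (Multiplicative.ofAdd (-p) : Multiplicative (Lex (Fin m → ℤ)))

namespace RankTwoAux

open MvPowerSeries

/-! ### Lex order facts -/

theorem lex_lt_iff (x y : Fin 2 → ℤ) :
    toLex x < toLex y ↔ x 0 < y 0 ∨ (x 0 = y 0 ∧ x 1 < y 1) := by
  constructor
  · rintro ⟨i, hj, hi⟩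
    fin_cases i
    · exact Or.inl hi
    · exact Or.inr ⟨hj 0 (by decide), hi⟩
  · rintro (h | ⟨h0, h1⟩)
    · exact ⟨0, by simp, h⟩
    · refine ⟨1, fun j hj => ?_, h1⟩
      have hj0 : j = 0 := by
        simp only [Fin.lt_def] at hj
        exact Fin.ext (by omega)
      subst hj0; exact h0

/-! ### expNeg facts -/

theorem eN_ne (p : Lex (Fin 2 → ℤ)) : expNeg 2 p ≠ 0 := WithZero.coe_ne_zero

theorem eN_lt {p q : Lex (Fin 2 → ℤ)} : expNeg 2 p < expNeg 2 q ↔ q < p := by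
  rw [expNeg, expNeg, WithZero.coe_lt_coe, Multiplicative.ofAdd_lt, neg_lt_neg_iff]
  exact Iff.rfl

theorem eN_mul (p q : Lex (Fin 2 → ℤ)) : expNeg 2 (p + q) = expNeg 2 p * expNeg 2 q := by
  rw [expNeg, expNeg, expNeg, ← WithZero.coe_mul, ← ofAdd_add, neg_add]

theorem eN_pow (p : Lex (Fin 2 → ℤ)) (n : ℕ) : expNeg 2 p ^ n = expNeg 2 (n • p) := by
  rw [expNeg, expNeg, ← WithZero.coe_pow, ← ofAdd_nsmul, ← neg_nsmul]

theorem eN_zero : expNeg 2 0 = 1 := by rw [expNeg, neg_zero, ofAdd_zero, WithZero.coe_one]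

theorem eN_lt_one {p : Lex (Fin 2 → ℤ)} : expNeg 2 p < 1 ↔ 0 < p := by
  rw [← eN_zero, eN_lt]

theorem eN_sub (p q : Lex (Fin 2 → ℤ)) : expNeg 2 (p - q) = expNeg 2 p / expNeg 2 q := by
  rw [expNeg, expNeg, expNeg, div_eq_mul_inv, ← WithZero.coe_inv, ← WithZero.coe_mul,
    ← ofAdd_neg, ← ofAdd_add]
  congr 1
  abel

theorem eN_inj {p q : Lex (Fin 2 → ℤ)} (h : expNeg 2 p = expNeg 2 q) : p = q := by
  rw [expNeg, expNeg] at h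
  exact neg_injective (Multiplicative.ofAdd.injective ((by exact_mod_cast h : (Multiplicative.ofAdd (-p) : Multiplicative (Lex (Fin 2 → ℤ))) = Multiplicative.ofAdd (-q))))

/-! ### Setting -/

variable {k : Type*} [Field k]

/-- the embedding of the power series ring in its fraction field -/
noncomputable abbrev emb :
    MvPowerSeries (Fin 2) k →+* FractionRing (MvPowerSeries (Fin 2) k) :=
  algebraMap _ _

/-- the monomial weight -/
def Lb (b : Fin 2 → Fin 2 → ℤ) (A : Fin 2 →₀ ℕ) : Lex (Fin 2 → ℤ) :=
  toLex fun j => ∑ i, (A i : ℤ) * b i j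

variable (v : Valuation (FractionRing (MvPowerSeries (Fin 2) k))
    (WithZero (Multiplicative (Lex (Fin 2 → ℤ)))))

theorem val_one
    (hRv : ∀ f : MvPowerSeries (Fin 2) k, v (emb f) ≤ 1)
    (hcenter : ∀ f : MvPowerSeries (Fin 2) k,
      v (emb f) < 1 ↔ constantCoeff f = 0)
    (g : MvPowerSeries (Fin 2) k) (hg : constantCoeff g ≠ 0) :
    v (emb g) = 1 :=
  le_antisymm (hRv g) (not_lt.mp fun h => hg ((hcenter g).mp h))

theorem bpos
    (hcenter : ∀ f : MvPowerSeries (Fin 2) k,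
      v (emb f) < 1 ↔ constantCoeff f = 0)
    (b : Fin 2 → Fin 2 → ℤ)
    (hvX : ∀ i, v (emb (X i)) = expNeg 2 (toLex (b i))) (i : Fin 2) :
    0 < toLex (b i) := by
  have h := (hcenter (X i)).mpr (constantCoeff_X i)
  rw [hvX i] at h
  exact eN_lt_one.mp h

theorem Lb_inj (b : Fin 2 → Fin 2 → ℤ) (hindep : LinearIndependent ℤ b)
    {A B : Fin 2 →₀ ℕ} (h : Lb b A = Lb b B) : A = B := by
  have h' : ∀ j, (∑ i, (A i : ℤ) * b i j) = ∑ i, (B i : ℤ) * b i j := fun j =>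
    congrFun (congrArg ofLex h) j
  have hz : ∑ i, (fun i => (A i : ℤ) - B i) i • b i = 0 := by
    funext j
    simp only [Finset.sum_apply, Pi.smul_apply, smul_eq_mul, Pi.zero_apply, sub_mul]
    rw [Finset.sum_sub_distrib, h' j, sub_self]
  have := Fintype.linearIndependent_iff.mp hindep _ hz
  ext i
  have := this i
  omega

theorem val_monomial
    (hRv : ∀ f : MvPowerSeries (Fin 2) k, v (emb f) ≤ 1)
    (hcenter : ∀ f : MvPowerSeries (Fin 2) k,
      v (emb f) < 1 ↔ constantCoeff f = 0)
    (b : Fin 2 → Fin 2 → ℤ)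
    (hvX : ∀ i, v (emb (X i)) = expNeg 2 (toLex (b i)))
    (A : Fin 2 →₀ ℕ) {c : k} (hc : c ≠ 0) :
    v (emb (monomial A c)) = expNeg 2 (Lb b A) := by
  have hAdec : A = Finsupp.single 0 (A 0) + Finsupp.single 1 (A 1) := by
    ext e
    fin_cases e <;> simp [Finsupp.single_apply]
  have hA : monomial A c = C (σ := Fin 2) c * X 0 ^ (A 0) * X 1 ^ (A 1) := by
    rw [X_pow_eq, X_pow_eq, ← monomial_zero_eq_C_apply, monomial_mul_monomial,
      monomial_mul_monomial, mul_one, mul_one, zero_add, ← hAdec]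
  have hLb : Lb b A = (A 0) • toLex (b 0) + (A 1) • toLex (b 1) := by
    have h2 : (fun j => ∑ i, (A i : ℤ) * b i j) = (A 0) • b 0 + (A 1) • b 1 := by
      funext j
      simp [Fin.sum_univ_two, nsmul_eq_mul]
    rw [Lb, h2]
    rfl
  rw [hA]
  simp only [map_mul, map_pow, hvX]
  rw [val_one v hRv hcenter _ (by rw [constantCoeff_C]; exact hc),
    eN_pow, eN_pow, one_mul, ← eN_mul, hLb]

theorem Lb_add (b : Fin 2 → Fin 2 → ℤ) (A B : Fin 2 →₀ ℕ) :
    Lb b (A + B) = Lb b A + Lb b B := by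
  have : (fun j => ∑ i, ((A + B) i : ℤ) * b i j)
      = (fun j => ∑ i, (A i : ℤ) * b i j) + fun j => ∑ i, (B i : ℤ) * b i j := by
    funext j
    simp [Finsupp.add_apply, add_mul, Finset.sum_add_distrib]
  rw [Lb, this]
  rfl

theorem Lb_single (b : Fin 2 → Fin 2 → ℤ) (s : Fin 2) (n : ℕ) :
    Lb b (Finsupp.single s n) = n • toLex (b s) := by
  have : (fun j => ∑ i, ((Finsupp.single s n : Fin 2 →₀ ℕ) i : ℤ) * b i j) = n • b s := by
    funext j
    rw [Finset.sum_eq_single s]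
    · simp [Finsupp.single_eq_same, nsmul_eq_mul]
    · intro i _ his
      simp [Finsupp.single_apply, Ne.symm his]
    · simp
  rw [Lb, this]
  rfl

theorem lemA
    (hRv : ∀ f : MvPowerSeries (Fin 2) k, v (emb f) ≤ 1)
    (hcenter : ∀ f : MvPowerSeries (Fin 2) k,
      v (emb f) < 1 ↔ constantCoeff f = 0)
    (b : Fin 2 → Fin 2 → ℤ)
    (hvX : ∀ i, v (emb (X i)) = expNeg 2 (toLex (b i)))
    (hindep : LinearIndependent ℤ b)
    (q : Lex (Fin 2 → ℤ)) (h : MvPowerSeries (Fin 2) k)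
    (hsupp : ∀ A : Fin 2 →₀ ℕ, coeff A h ≠ 0 → q < Lb b A) :
    v (emb h) < expNeg 2 q := by
  classical
  have hbpos := bpos v hcenter b hvX
  have hbnn : ∀ i, 0 ≤ b i 0 := by
    intro i
    rcases (lex_lt_iff 0 (b i)).mp (hbpos i) with h' | ⟨h', _⟩
    · simp only [Pi.zero_apply] at h'; omega
    · simp only [Pi.zero_apply] at h'; omega
  have hex : ∃ i, 0 < b i 0 := by
    by_contra hne
    push_neg at hne
    have h0 : ∀ i, b i 0 = 0 := fun i => le_antisymm (hne i) (hbnn i)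
    have h1 : ∀ i, 0 < b i 1 := by
      intro i
      rcases (lex_lt_iff 0 (b i)).mp (hbpos i) with h' | ⟨_, h'⟩
      · simp [h0 i] at h'
      · simpa using h'
    have hz : ∑ e, (fun e : Fin 2 => if e = 0 then b 1 1 else -(b 0 1)) e • b e = 0 := by
      funext j
      fin_cases j <;> simp [Fin.sum_univ_two, h0] <;> try ring
    have h2 := Fintype.linearIndependent_iff.mp hindep _ hz 0
    simp only [if_pos rfl] at h2
    exact absurd h2 (ne_of_gt (h1 1))
  obtain ⟨i, hbi⟩ := hex
  have hij' : ∀ i : Fin 2, i ≠ 1 - i := by decide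
  set j : Fin 2 := 1 - i with hjdef
  have hij : i ≠ j := hij' i
  -- the column series
  set g : ℕ → MvPowerSeries (Fin 2) k :=
    fun c => (fun A => if A i = 0 then coeff (A + Finsupp.single i c) h else 0 :
      MvPowerSeries (Fin 2) k) with hgdef
  have hgc : ∀ c (B : Fin 2 →₀ ℕ),
      coeff B (g c) = if B i = 0 then coeff (B + Finsupp.single i c) h else 0 :=
    fun c B => rfl
  have hXg : ∀ c (A : Fin 2 →₀ ℕ),
      coeff A (X i ^ c * g c) = if A i = c then coeff A h else 0 := by
    intro c A
    rw [X_pow_eq, coeff_monomial_mul, one_mul]  -- note: a * coeff ... -- might need fixing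
    by_cases hle : Finsupp.single i c ≤ A
    · rw [if_pos hle, hgc]
      have hci : c ≤ A i := Finsupp.single_le_iff.mp hle
      have hsubi : (A - Finsupp.single i c) i = A i - c := by
        rw [Finsupp.tsub_apply, Finsupp.single_eq_same]
      have hadd : A - Finsupp.single i c + Finsupp.single i c = A :=
        tsub_add_cancel_of_le hle
      rw [hsubi, hadd]
      by_cases hAi : A i = c
      · rw [if_pos (by omega), if_pos hAi]
      · rw [if_neg (by omega), if_neg hAi]
    · rw [if_neg hle, if_neg]
      intro hAi
      exact hle (Finsupp.single_le_iff.mpr (le_of_eq hAi.symm))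
  -- the number of columns
  set N : ℕ := (ofLex q 0).toNat + 1 with hNdef
  have hNq : ofLex q 0 < (N : ℤ) * b i 0 := by
    have h1 : ofLex q 0 + 1 ≤ (N : ℤ) := by
      rw [hNdef]
      push_cast
      omega
    nlinarith [hbi]
  -- the tail
  have hdvd : (X i : MvPowerSeries (Fin 2) k) ^ N ∣
      (h - ∑ c ∈ Finset.range N, X i ^ c * g c) := by
    rw [X_pow_dvd_iff]
    intro A hA
    rw [map_sub, map_sum]
    simp only [hXg]
    rw [Finset.sum_ite_eq (Finset.range N) (A i) fun _ => coeff A h,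
      if_pos (Finset.mem_range.mpr hA), sub_self]
  obtain ⟨t, ht⟩ := hdvd
  have hdecomp : h = (∑ c ∈ Finset.range N, X i ^ c * g c) + X i ^ N * t := by
    rw [← ht]
    ring
  rw [hdecomp, map_add]
  apply Valuation.map_add_lt
  · -- the finite sum of columns
    rw [map_sum]
    apply v.map_sum_lt (eN_ne q)
    intro c _
    by_cases hg0 : g c = 0
    · rw [hg0, mul_zero, map_zero, map_zero]
      exact zero_lt_iff.mpr (eN_ne q)
    · -- the order of the column
      have hexm : ∃ m, coeff (Finsupp.single j m) (g c) ≠ 0 := by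
        by_contra hall
        push_neg at hall
        apply hg0
        ext B
        by_cases hBi : B i = 0
        · have hB : B = Finsupp.single j (B j) := by
            ext e
            rcases (by decide : ∀ e i j : Fin 2, i ≠ j → e = i ∨ e = j) e i j hij with rfl | rfl
            · rw [hBi, Finsupp.single_apply, if_neg (Ne.symm hij)]
            · rw [Finsupp.single_eq_same]
          rw [hB, hall (B j), map_zero]
        · rw [hgc, if_neg hBi, map_zero]
      set o : ℕ := Nat.find hexm with hodef
      have ho : coeff (Finsupp.single j o) (g c) ≠ 0 := Nat.find_spec hexm
      have homin : ∀ m, m < o → coeff (Finsupp.single j m) (g c) = 0 := fun m hm =>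
        not_not.mp (Nat.find_min hexm hm)
      set u : MvPowerSeries (Fin 2) k :=
        (fun B => coeff (B + Finsupp.single j o) (g c) : MvPowerSeries (Fin 2) k) with hudef
      have hu : ∀ B : Fin 2 →₀ ℕ, coeff B u = coeff (B + Finsupp.single j o) (g c) :=
        fun B => rfl
      have hu0 : constantCoeff u ≠ 0 := by
        rw [← coeff_zero_eq_constantCoeff_apply, hu, zero_add]
        exact ho
      have hgu : g c = X j ^ o * u := by
        ext A
        rw [X_pow_eq, coeff_monomial_mul, one_mul]
        by_cases hle : Finsupp.single j o ≤ A
        · rw [if_pos hle, hu, tsub_add_cancel_of_le hle]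
        · rw [if_neg hle]
          have hAj : A j < o := by
            by_contra hc2
            exact hle (Finsupp.single_le_iff.mpr (by omega))
          by_cases hAi : A i = 0
          · have hB : A = Finsupp.single j (A j) := by
              ext e
              rcases (by decide : ∀ e i j : Fin 2, i ≠ j → e = i ∨ e = j) e i j hij
                with rfl | rfl
              · rw [hAi, Finsupp.single_apply, if_neg (Ne.symm hij)]
              · rw [Finsupp.single_eq_same]
            rw [hB, homin (A j) hAj]
          · rw [hgc, if_neg hAi]
      -- the support point
      have hAch : coeff (Finsupp.single i c + Finsupp.single j o) h ≠ 0 := by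
        have := ho
        rw [hgc, if_pos (by rw [Finsupp.single_apply, if_neg (Ne.symm hij)])] at this
        rwa [add_comm] at this
      have hql : q < Lb b (Finsupp.single i c + Finsupp.single j o) := hsupp _ hAch
      have hval : v (emb (X i ^ c * g c))
          = expNeg 2 (Lb b (Finsupp.single i c + Finsupp.single j o)) := by
        rw [hgu, Lb_add, Lb_single, Lb_single]
        simp only [map_mul, map_pow, hvX]
        rw [val_one v hRv hcenter _ hu0, mul_one, eN_pow, eN_pow, ← eN_mul]
      rw [hval]
      exact eN_lt.mpr hql
  · -- the tail
    have hb1 : v (emb (X i ^ N * t)) ≤ expNeg 2 (N • toLex (b i)) := by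
      simp only [map_mul, map_pow, hvX, eN_pow]
      calc expNeg 2 (N • toLex (b i)) * v (emb t) ≤ expNeg 2 (N • toLex (b i)) * 1 :=
            mul_le_mul_right (hRv t) _
        _ = expNeg 2 (N • toLex (b i)) := mul_one _
    apply lt_of_le_of_lt hb1
    apply eN_lt.mpr
    exact (lex_lt_iff (ofLex q) (N • b i)).mpr (Or.inl (by
      rw [Pi.smul_apply, nsmul_eq_mul]; exact hNq))

theorem val_eq
    (hRv : ∀ f : MvPowerSeries (Fin 2) k, v (emb f) ≤ 1)
    (hcenter : ∀ f : MvPowerSeries (Fin 2) k,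
      v (emb f) < 1 ↔ constantCoeff f = 0)
    (b : Fin 2 → Fin 2 → ℤ)
    (hvX : ∀ i, v (emb (X i)) = expNeg 2 (toLex (b i)))
    (hindep : LinearIndependent ℤ b)
    (f : MvPowerSeries (Fin 2) k) (p : Lex (Fin 2 → ℤ))
    (hp : IsLeast (Lb b '' {A | coeff A f ≠ 0}) p) :
    v (emb f) = expNeg 2 p := by
  classical
  obtain ⟨A0, hA0supp, hA0p⟩ := hp.1
  set c : k := coeff A0 f with hcdef
  have hc : c ≠ 0 := hA0supp
  set g : MvPowerSeries (Fin 2) k := f - monomial A0 c with hgdef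
  have hsupp : ∀ A : Fin 2 →₀ ℕ, coeff A g ≠ 0 → p < Lb b A := by
    intro A hA
    rw [hgdef, map_sub, coeff_monomial] at hA
    have hAA0 : A ≠ A0 := by
      intro hh
      rw [if_pos hh, hh, ← hcdef, sub_self] at hA
      exact hA rfl
    rw [if_neg hAA0, sub_zero] at hA
    have hle : p ≤ Lb b A := hp.2 ⟨A, hA, rfl⟩
    rcases lt_or_eq_of_le hle with hlt | heq
    · exact hlt
    · exact absurd (Lb_inj b hindep (heq.symm.trans hA0p.symm)) hAA0
  have hvg : v (emb g) < expNeg 2 p := lemA v hRv hcenter b hvX hindep p g hsupp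
  have hvm : v (emb (monomial A0 c)) = expNeg 2 p := by
    rw [val_monomial v hRv hcenter b hvX A0 hc, hA0p]
  have hf : f = monomial A0 c + g := by rw [hgdef]; ring
  rw [hf, map_add, Valuation.map_add_eq_of_lt_left _ (by rw [hvm]; exact hvg), hvm]

theorem least_exists
    (hcenter : ∀ f : MvPowerSeries (Fin 2) k,
      v (emb f) < 1 ↔ constantCoeff f = 0)
    (b : Fin 2 → Fin 2 → ℤ)
    (hvX : ∀ i, v (emb (X i)) = expNeg 2 (toLex (b i)))
    (f : MvPowerSeries (Fin 2) k) (hf : f ≠ 0) :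
    ∃ p, IsLeast (Lb b '' {A | coeff A f ≠ 0}) p := by
  classical
  have hbpos := bpos v hcenter b hvX
  set S : Set (Fin 2 →₀ ℕ) := {A | coeff A f ≠ 0} with hSdef
  have hSne : S.Nonempty := by
    by_contra he
    apply hf
    ext A
    rw [map_zero]
    by_contra hc
    exact he ⟨A, hc⟩
  set ψ : (Fin 2 → ℕ) → Lex (Fin 2 → ℤ) :=
    fun g => toLex fun j => ∑ i, (g i : ℤ) * b i j with hψdef
  have hψmono : Monotone ψ := by
    intro x y hxy
    have key : ψ y - ψ x = ((y 0 : ℤ) - x 0) • toLex (b 0) + ((y 1 : ℤ) - x 1) • toLex (b 1) := by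
      have h2 : ((fun j => ∑ i, (y i : ℤ) * b i j) - fun j => ∑ i, (x i : ℤ) * b i j)
          = ((y 0 : ℤ) - x 0) • b 0 + ((y 1 : ℤ) - x 1) • b 1 := by
        funext j
        simp [Fin.sum_univ_two, smul_eq_mul]
        ring
      exact congrArg toLex h2
    have hge : 0 ≤ ψ y - ψ x := by
      rw [key]
      have h0 : ∀ i : Fin 2, (0 : ℤ) ≤ (y i : ℤ) - x i := fun i =>
        sub_nonneg.mpr (by exact_mod_cast hxy i)
      exact add_nonneg (zsmul_nonneg (le_of_lt (hbpos 0)) (h0 0))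
        (zsmul_nonneg (le_of_lt (hbpos 1)) (h0 1))
    exact sub_nonneg.mp hge
  have hPWO : ((fun A : Fin 2 →₀ ℕ => (A : Fin 2 → ℕ)) '' S).IsPWO :=
    Set.isPWO_of_wellQuasiOrderedLE _
  have himg : ψ '' ((fun A : Fin 2 →₀ ℕ => (A : Fin 2 → ℕ)) '' S) = Lb b '' S := by
    rw [Set.image_image]
    rfl
  have hWF : (Lb b '' S).IsWF := by
    rw [← himg]
    exact (hPWO.image_of_monotone hψmono).isWF
  have hne' : (Lb b '' S).Nonempty := hSne.image _
  exact ⟨hWF.min hne', hWF.min_mem hne', fun x hx => hWF.min_le hne' hx⟩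

end RankTwoAux


open RankTwoAux MvPowerSeries in
/-- A discrete rank two valuation `v` of `K = k((X₁,X₂))` with value group `ℤ²` (lex),
finite over `R = k[[X₁,X₂]]` and centered at its maximal ideal, such that `v(X₁)` and
`v(X₂)` are `ℤ`-linearly independent: then `{v(X₁), v(X₂)}` is a basis of `ℤ²`, `v` is
the monomial valuation associated to `{v(X₁), v(X₂)}`, and `v` is zero-dimensional (its
residue field is `k`). -/
theorem rank_two_valuation_with_independent_values_is_monomial (k : Type*) [Field k]
    [IsAlgClosed k]
    (v : Valuation (FractionRing (MvPowerSeries (Fin 2) k))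
      (WithZero (Multiplicative (Lex (Fin 2 → ℤ)))))
    (hsurj : ∀ γ, ∃ x, v x = γ)
    (hRv : ∀ f : MvPowerSeries (Fin 2) k,
      v (algebraMap (MvPowerSeries (Fin 2) k) (FractionRing (MvPowerSeries (Fin 2) k)) f) ≤ 1)
    (hcenter : ∀ f : MvPowerSeries (Fin 2) k,
      v (algebraMap (MvPowerSeries (Fin 2) k) (FractionRing (MvPowerSeries (Fin 2) k)) f) < 1 ↔
        MvPowerSeries.constantCoeff f = 0)
    (b : Fin 2 → (Fin 2 → ℤ))
    (hvX : ∀ i, v (algebraMap (MvPowerSeries (Fin 2) k)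
      (FractionRing (MvPowerSeries (Fin 2) k)) (MvPowerSeries.X i)) = expNeg 2 (toLex (b i)))
    (hindep : LinearIndependent ℤ b) :
    Submodule.span ℤ (Set.range b) = ⊤ ∧
    (∀ f : MvPowerSeries (Fin 2) k, f ≠ 0 → ∀ p : Lex (Fin 2 → ℤ),
      IsLeast ((fun A : Fin 2 →₀ ℕ => toLex fun j => ∑ i, (A i : ℤ) * b i j) ''
        {A | MvPowerSeries.coeff A f ≠ 0}) p →
      v (algebraMap (MvPowerSeries (Fin 2) k) (FractionRing (MvPowerSeries (Fin 2) k)) f) =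
        expNeg 2 p) ∧
    (∀ x : FractionRing (MvPowerSeries (Fin 2) k), v x = 1 →
      ∃ c : k, v (x - algebraMap (MvPowerSeries (Fin 2) k)
        (FractionRing (MvPowerSeries (Fin 2) k)) ((MvPowerSeries.C (σ := Fin 2) c))) < 1) := by
  classical
  have hLb_mem : ∀ A : Fin 2 →₀ ℕ, ofLex (Lb b A) ∈ Submodule.span ℤ (Set.range b) := by
    intro A
    have hrepr : ofLex (Lb b A) = (A 0 : ℤ) • b 0 + (A 1 : ℤ) • b 1 := by
      funext j
      show (∑ i, (A i : ℤ) * b i j) = _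
      simp [Fin.sum_univ_two, smul_eq_mul]
    rw [hrepr]
    exact Submodule.add_mem _
      (Submodule.smul_mem _ _ (Submodule.subset_span ⟨0, rfl⟩))
      (Submodule.smul_mem _ _ (Submodule.subset_span ⟨1, rfl⟩))
  refine ⟨?_, fun f _ p hp => val_eq v hRv hcenter b hvX hindep f p hp, ?_⟩
  · -- the span is everything
    rw [Submodule.eq_top_iff']
    intro q
    obtain ⟨x, hx⟩ := hsurj (expNeg 2 (toLex q))
    have hx0 : x ≠ 0 := by
      intro h0; rw [h0, map_zero] at hx; exact eN_ne _ hx.symm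
    obtain ⟨f, g, hgnz, hfg⟩ :=
      IsFractionRing.div_surjective (A := MvPowerSeries (Fin 2) k) x
    have hg0 : g ≠ 0 := nonZeroDivisors.ne_zero hgnz
    have hg0' : (emb g : FractionRing (MvPowerSeries (Fin 2) k)) ≠ 0 := fun hh =>
      hg0 ((map_eq_zero_iff _ (IsFractionRing.injective _ _)).mp hh)
    have hf0 : f ≠ 0 := by
      intro h0
      rw [h0, map_zero, zero_div] at hfg
      exact hx0 hfg.symm
    obtain ⟨pf, hpf⟩ := least_exists v hcenter b hvX f hf0
    obtain ⟨pg, hpg⟩ := least_exists v hcenter b hvX g hg0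
    have hvf := val_eq v hRv hcenter b hvX hindep f pf hpf
    have hvg := val_eq v hRv hcenter b hvX hindep g pg hpg
    have hdiv : expNeg 2 pf / expNeg 2 pg = expNeg 2 (toLex q) := by
      rw [← hvf, ← hvg, ← Valuation.map_div, hfg, hx]
    have hq : pf - pg = toLex q := eN_inj (by rw [eN_sub, hdiv])
    obtain ⟨Af, _, hAf⟩ := hpf.1
    obtain ⟨Ag, _, hAg⟩ := hpg.1
    have hmem : ofLex pf - ofLex pg ∈ Submodule.span ℤ (Set.range b) := by
      rw [← hAf, ← hAg]
      exact Submodule.sub_mem _ (hLb_mem Af) (hLb_mem Ag)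
    have hqr : q = ofLex pf - ofLex pg := (congrArg ofLex hq).symm
    rw [hqr]
    exact hmem
  · -- residue field is k
    intro x hx1
    obtain ⟨f, g, hgnz, hfg⟩ :=
      IsFractionRing.div_surjective (A := MvPowerSeries (Fin 2) k) x
    have hg0 : g ≠ 0 := nonZeroDivisors.ne_zero hgnz
    have hg0' : (emb g : FractionRing (MvPowerSeries (Fin 2) k)) ≠ 0 := fun hh =>
      hg0 ((map_eq_zero_iff _ (IsFractionRing.injective _ _)).mp hh)
    have hvg0 : v (emb g) ≠ 0 := v.ne_zero_iff.mpr hg0'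
    have hvfg : v (emb f) = v (emb g) := by
      have hdd : v (emb f) / v (emb g) = 1 := by
        rw [← Valuation.map_div, hfg, hx1]
      exact (div_eq_one_iff_eq hvg0).mp hdd
    have hf0 : f ≠ 0 := by
      intro h0
      rw [h0, map_zero, map_zero] at hvfg
      exact hvg0 hvfg.symm
    obtain ⟨pf, hpf⟩ := least_exists v hcenter b hvX f hf0
    obtain ⟨pg, hpg⟩ := least_exists v hcenter b hvX g hg0
    have hvf := val_eq v hRv hcenter b hvX hindep f pf hpf
    have hvg := val_eq v hRv hcenter b hvX hindep g pg hpg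
    have hpfg : pf = pg := eN_inj (by rw [← hvf, ← hvg, hvfg])
    obtain ⟨Af, hAfs, hAfp⟩ := hpf.1
    obtain ⟨Ag, hAgs, hAgp⟩ := hpg.1
    have hAfg : Af = Ag := Lb_inj b hindep (by rw [hAfp, hAgp, hpfg])
    rw [← hAfg] at hAgs
    set c : k := coeff Af f with hcdef
    set d : k := coeff Af g with hddef
    have hc : c ≠ 0 := hAfs
    have hd : d ≠ 0 := hAgs
    refine ⟨c * d⁻¹, ?_⟩
    set h : MvPowerSeries (Fin 2) k := f - C (σ := Fin 2) (c * d⁻¹) * g with hhdef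
    have hxsub : x - emb (C (σ := Fin 2) (c * d⁻¹)) = emb h / emb g := by
      rw [hhdef, map_sub, map_mul (emb (k := k)) (C (σ := Fin 2) (c * d⁻¹)) g,
        eq_div_iff hg0', sub_mul, ← hfg, div_mul_cancel₀ _ hg0']
    have hsupp : ∀ A : Fin 2 →₀ ℕ, coeff A h ≠ 0 → pf < Lb b A := by
      intro A hA
      have hcoeff : coeff A h = coeff A f - c * d⁻¹ * coeff A g := by
        rw [hhdef, map_sub, coeff_C_mul]
      have hAA0 : A ≠ Af := by
        intro hh
        rw [hcoeff, hh, ← hcdef, ← hddef, mul_assoc, inv_mul_cancel₀ hd, mul_one,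
          sub_self] at hA
        exact hA rfl
      by_cases hAf' : coeff A f ≠ 0
      · rcases lt_or_eq_of_le (hpf.2 ⟨A, hAf', rfl⟩) with hlt | heq
        · exact hlt
        · exact absurd (Lb_inj b hindep (heq.symm.trans hAfp.symm)) hAA0
      · have hAg' : coeff A g ≠ 0 := by
          intro hz
          rw [hcoeff, hz, mul_zero, sub_zero] at hA
          exact hAf' hA
        rcases lt_or_eq_of_le (hpg.2 ⟨A, hAg', rfl⟩) with hlt | heq
        · rw [hpfg]; exact hlt
        · rw [← hAfg] at hAgp
          exact absurd (Lb_inj b hindep (heq.symm.trans hAgp.symm)) hAA0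
    have hvh : v (emb h) < expNeg 2 pf := lemA v hRv hcenter b hvX hindep pf h hsupp
    rw [hpfg] at hvh
    have hpos : (0 : WithZero (Multiplicative (Lex (Fin 2 → ℤ)))) < expNeg 2 pg :=
      zero_lt_iff.mpr (eN_ne pg)
    rw [hxsub, Valuation.map_div, hvg, div_lt_iff₀ hpos, one_mul]
    exact hvh
end
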